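/- Let Σ be a finite unital ring of size q ≥ 2 and k ≥ 2 the duplication-window length. Then the average of r(x) over all x ∈ Σ^n satisfies (1/q^n) Σ_{x∈Σ^n} r(x) = ((q−1)/(q(q^k−1)))·(n−k) + O(1); that is, there is a constant B (depending only on q and k) such that for all n ≥ k, |(1/q^n) Σ_{x∈Σ^n} r(x) − ((q−1)/(q(q^k−1)))·(n−k)| ≤ B. -/

import Mathlib

open scoped BigOperators Classical
open Filter

namespace TandemDup

variable {S : Type} [Fintype S] [DecidableEq S] [Ring S]

/-- A single tandem duplication with window length `k`:
`a = xyz` with `|y| = k` is mapped to `b = xyyz`. -/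
def Dup (k : ℕ) (a b : List S) : Prop :=
  ∃ x y z : List S, y.length = k ∧ a = x ++ y ++ z ∧ b = x ++ y ++ y ++ z

/-- `DescN k t x y` : `y` is a `t`-descendant of `x`. -/
def DescN (k : ℕ) : ℕ → List S → List S → Prop
  | 0, a, b => a = b
  | t + 1, a, b => ∃ c, DescN k t a c ∧ Dup k c b

/-- The set `D^t(x)` of `t`-descendants of `x`. -/
def DSet (k t : ℕ) (x : List S) : Set (List S) := {y | DescN k t x y}

/-- The descendant cone `D^*(x)`. -/
def DStar (k : ℕ) (x : List S) : Set (List S) := ⋃ t : ℕ, DSet k t x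

/-- A string of length at least `k` is irreducible if it has no ancestor other than itself. -/
def Irred (k : ℕ) (x : List S) : Prop :=
  k ≤ x.length ∧ ∀ z : List S, x ∈ DStar k z → z = x

/-- The duplication root `rt(y)`: an irreducible ancestor of `y` (unique, by the theory). -/
noncomputable def rt (k : ℕ) (y : List S) : List S :=
  if h : ∃ x : List S, Irred k x ∧ y ∈ DStar k x then h.choose else y

/-- The (non-anchor part of the) discrete derivative `φ̄(x)`. -/
def phiBar (k : ℕ) (x : List S) : List S :=
  (List.range (x.length - k)).map (fun i => x.getD (i + k) 0 - x.getD i 0)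

/-- Hamming weight of a string: the number of its nonzero letters. -/
def wtH (l : List S) : ℕ := (l.filter (fun a => decide (a ≠ 0))).length

/-- `w(x) := wt_H(φ̄(x))`. -/
def wgt (k : ℕ) (x : List S) : ℕ := wtH (phiBar k x)

/-- `r(x) := (|x| - |rt(x)|)/k`, the number of duplications taking `rt(x)` to `x`. -/
noncomputable def rr (k : ℕ) (x : List S) : ℕ := (x.length - (rt k x).length) / k

/-- The typicality condition on the weight `w`. -/
def wTypical (q k n w : ℕ) : Prop :=
  |(w : ℝ) - (((q : ℝ) - 1) / (q : ℝ)) * ((n : ℝ) - (k : ℝ))| < (n : ℝ) ^ ((3 : ℝ) / 4)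

/-- The typicality condition on the number of duplications `r`. -/
def rTypical (q k n r : ℕ) : Prop :=
  |(r : ℝ) - (((q : ℝ) - 1) / ((q : ℝ) * ((q : ℝ) ^ k - 1))) * ((n : ℝ) - (k : ℝ))|
    < 2 * (n : ℝ) ^ ((3 : ℝ) / 4)

/-- The typical set `typ^n`. -/
def typ (k n : ℕ) : Set (List S) :=
  {x | x.length = n ∧ wTypical (Fintype.card S) k n (wgt k x) ∧
    rTypical (Fintype.card S) k n (rr k x)}

/-- The uncertainty `N_t(m, C)`: the maximal size of `⋂ᵢ D^t(xᵢ)` over pairwise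
distinct `x₁, …, x_m ∈ C`. -/
noncomputable def Nt (k t m : ℕ) (C : Set (List S)) : ℕ :=
  sSup { N : ℕ | ∃ f : Fin m → List S, Function.Injective f ∧ (∀ i, f i ∈ C) ∧
    N = (⋂ i, DSet k t (f i)).ncard }

/-- `S̄_t(u₁, …, u_m) = ⋂ᵢ {v : v ≥ uᵢ, ‖v - uᵢ‖₁ = t}`. -/
def Sbar (w t : ℕ) {m : ℕ} (u : Fin m → (Fin (w + 1) → ℕ)) : Set (Fin (w + 1) → ℕ) :=
  ⋂ i, {v | u i ≤ v ∧ ∑ j, (v j - u i j) = t}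

/-- `N̄_t(m, w, r)`. -/
noncomputable def Nbar (t m w r : ℕ) : ℕ :=
  sSup { N : ℕ | ∃ u : Fin m → (Fin (w + 1) → ℕ), Function.Injective u ∧
    (∀ i, ∑ j, u i j = r) ∧ N = (Sbar w t u).ncard }

/-- The minimum supremum height `σ(m, w, r)`. -/
noncomputable def sigma (m w r : ℕ) : ℕ :=
  sInf { s : ℕ | ∃ u : Fin m → (Fin (w + 1) → ℕ), Function.Injective u ∧
    (∀ i, ∑ j, u i j = r) ∧ (∑ j, Finset.univ.sup fun i => u i j) = r + s }

/-- The lower-bounds set `A_r(u)`. -/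
def lbs (w r : ℕ) (u : Fin (w + 1) → ℕ) : Set (Fin (w + 1) → ℕ) :=
  {v | (∑ j, v j) = r ∧ v ≤ u}

/-- The maximal lower-bounds-set size `μ(w, r, s)`. -/
noncomputable def mu (w r s : ℕ) : ℕ :=
  sSup { N : ℕ | ∃ u : Fin (w + 1) → ℕ, (∑ j, u j) = r + s ∧ N = (lbs w r u).ncard }

/-- Twice the distance `d₁`, i.e. the `ℓ₁`-distance `‖u - v‖₁` on `ℕ^{w+1}`. -/
def l1dist {w : ℕ} (u v : Fin (w + 1) → ℕ) : ℕ :=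
  ∑ j, ((u j - v j) + (v j - u j))

/-- `N̄_t(m, w, r, d)`. -/
noncomputable def NbarD (t m w r d : ℕ) : ℕ :=
  sSup { N : ℕ | ∃ u : Fin m → (Fin (w + 1) → ℕ),
    (∀ i, ∑ j, u i j = r) ∧ (∀ i j, i ≠ j → 2 * d ≤ l1dist (u i) (u j)) ∧
    N = (Sbar w t u).ncard }

/-- `σ(m, w, r, d)`. -/
noncomputable def sigmaD (m w r d : ℕ) : ℕ :=
  sInf { s : ℕ | ∃ u : Fin m → (Fin (w + 1) → ℕ),
    (∀ i, ∑ j, u i j = r) ∧ (∀ i j, i ≠ j → 2 * d ≤ l1dist (u i) (u j)) ∧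
    (∑ j, Finset.univ.sup fun i => u i j) = r + s }

/-- `μ(w, r, s, d)`. -/
noncomputable def muD (w r s d : ℕ) : ℕ :=
  sSup { N : ℕ | ∃ u : Fin (w + 1) → ℕ, (∑ j, u j) = r + s ∧
    ∃ C : Set (Fin (w + 1) → ℕ), C ⊆ lbs w r u ∧
      (∀ v₁ ∈ C, ∀ v₂ ∈ C, v₁ ≠ v₂ → 2 * d ≤ l1dist v₁ v₂) ∧ N = C.ncard }

/-- The duplication distance `d(y₁, y₂)`. -/
noncomputable def distDup (k : ℕ) (y₁ y₂ : List S) : ℕ :=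
  sInf {t : ℕ | (DSet k t y₁ ∩ DSet k t y₂).Nonempty}

/-- `N^typ_t(m, n, d)`. -/
noncomputable def NtypD (k t m n d : ℕ) : ℕ :=
  sSup { N : ℕ | ∃ f : Fin m → List S, (∀ i, f i ∈ typ k n) ∧
    (∀ i j, i ≠ j → d ≤ distDup k (f i) (f j)) ∧
    N = (⋂ i, DSet k t (f i)).ncard }

/-- `A(ν, D, ω)`: the maximum size of a binary code of length `ν`, constant Hamming
weight `ω`, and minimum Hamming distance `D`. -/
noncomputable def Abin (ν D ω : ℕ) : ℕ :=
  sSup { N : ℕ | ∃ C : Set (Fin ν → ZMod 2), (∀ x ∈ C, hammingNorm x = ω) ∧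
    (∀ x ∈ C, ∀ y ∈ C, x ≠ y → D ≤ hammingDist x y) ∧ N = C.ncard }

/-- Zero-run-length representation: `ψ_x(y)` as a list, mapping `φ̄(y)` written as
`0^{u(1)} a₁ 0^{u(2)} … a_w 0^{u(w+1)}` (with the `aᵢ` nonzero) to
`(⌊u(1)/k⌋, …, ⌊u(w+1)/k⌋)`. -/
def psiList (k : ℕ) (y : List S) : List ℕ :=
  ((phiBar k y).splitOnP (fun a => decide (a ≠ 0))).map (fun run => run.length / k)

/-- `ψ_x(y)` as a vector in `ℕ^{w+1}`. -/
def psiVec (k w : ℕ) (y : List S) : Fin (w + 1) → ℕ := fun i => (psiList k y).getD i 0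

/-- `s = ⌈log_n m⌉`. -/
noncomputable def sExp (n m : ℕ) : ℕ := ⌈Real.logb n m⌉₊

/-- The indicator `δ(m, n)` of Theorem 17. -/
noncomputable def deltaTyp (q k n m : ℕ) : ℕ :=
  if ∀ r : ℕ, rTypical q k n r → Nat.choose (r + sExp n m) r < m then 1 else 0

/-- `s = ⌈log_n m⌉ + d - 1`. -/
noncomputable def sExpD (n m d : ℕ) : ℕ := sExp n m + (d - 1)

/-- The indicator `δ(m, n, d)` of Theorem 29. -/
noncomputable def deltaEcc (q k d n m : ℕ) : ℕ :=
  if ∀ r : ℕ, rTypical q k n r → Abin (r + sExpD n m d) (2 * d) (sExpD n m d) < m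
  then 1 else 0


set_option linter.unusedSectionVars false

/-- Run-counting auxiliary: `gg k r l` is `⌊r'/k⌋` summed over "zero runs",
where the current run already has `r` zeros. -/
def gg (k : ℕ) : ℕ → List S → ℕ
  | r, [] => r / k
  | r, a :: l => if a = 0 then gg k (r + 1) l else r / k + gg k 0 l

@[simp] lemma gg_nil (k r : ℕ) : gg k r ([] : List S) = r / k := rfl

@[simp] lemma gg_cons_zero (k r : ℕ) (l : List S) :
    gg k r ((0 : S) :: l) = gg k (r + 1) l := by simp [gg]

lemma gg_cons_ne (k r : ℕ) {a : S} (h : a ≠ 0) (l : List S) :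
    gg k r (a :: l) = r / k + gg k 0 l := by simp [gg, h]

lemma gg_add_k (k : ℕ) (hk : 0 < k) : ∀ (l : List S) (r : ℕ),
    gg k (r + k) l = gg k r l + 1
  | [], r => by simp [Nat.add_div_right _ hk]
  | a :: l, r => by
    by_cases h : a = 0
    · subst h
      rw [gg_cons_zero, gg_cons_zero, show r + k + 1 = r + 1 + k by omega,
        gg_add_k k hk l (r + 1)]
    · rw [gg_cons_ne k _ h, gg_cons_ne k _ h, Nat.add_div_right _ hk]
      omega

lemma gg_replicate_append (k : ℕ) (v : List S) : ∀ (m r : ℕ),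
    gg k r (List.replicate m (0 : S) ++ v) = gg k (r + m) v
  | 0, r => by simp
  | m + 1, r => by
    rw [List.replicate_succ, List.cons_append, gg_cons_zero,
      gg_replicate_append k v m (r + 1), show r + 1 + m = r + (m + 1) by omega]

lemma gg_insert (k : ℕ) (hk : 0 < k) (v : List S) : ∀ (u : List S) (r : ℕ),
    gg k r (u ++ List.replicate k (0 : S) ++ v) = gg k r (u ++ v) + 1
  | [], r => by
    simp only [List.nil_append, gg_replicate_append]
    exact gg_add_k k hk v r
  | a :: u, r => by
    by_cases h : a = 0
    · subst h
      simp only [List.cons_append, gg_cons_zero, ← List.append_assoc]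
      exact gg_insert k hk v u (r + 1)
    · simp only [List.cons_append, gg_cons_ne k _ h, ← List.append_assoc,
        gg_insert k hk v u 0]
      omega

lemma gg_pos (k : ℕ) : ∀ (l : List S) (r : ℕ), r < k → 0 < gg k r l →
    (∃ u v : List S, l = u ++ List.replicate k (0 : S) ++ v) ∨
      ∃ v : List S, l = List.replicate (k - r) (0 : S) ++ v
  | [], r, hr, hpos => by simp [Nat.div_eq_of_lt hr] at hpos
  | a :: l, r, hr, hpos => by
    by_cases h : a = 0
    · subst h
      rcases Nat.lt_or_ge (r + 1) k with h1 | h1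
      · rcases gg_pos k l (r + 1) h1 (by simpa using hpos) with ⟨u, v, huv⟩ | ⟨v, hv⟩
        · exact Or.inl ⟨(0 : S) :: u, v, by simp [huv]⟩
        · refine Or.inr ⟨v, ?_⟩
          rw [hv, show k - r = (k - (r + 1)) + 1 by omega, List.replicate_succ]
          simp
      · refine Or.inr ⟨l, ?_⟩
        rw [show k - r = 1 by omega]
        simp
    · rw [gg_cons_ne k _ h, Nat.div_eq_of_lt hr] at hpos
      rcases gg_pos k l 0 (by omega) (by simpa using hpos) with ⟨u, v, huv⟩ | ⟨v, hv⟩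
      · exact Or.inl ⟨a :: u, v, by simp [huv]⟩
      · exact Or.inl ⟨[a], v, by simpa using hv⟩
lemma phiBar_length (k : ℕ) (l : List S) : (phiBar k l).length = l.length - k := by
  simp [phiBar]

lemma phiBar_getElem (k : ℕ) (l : List S) (j : ℕ) (h : j < l.length - k) :
    (phiBar k l)[j]'(by simpa [phiBar_length]) = l.getD (j + k) 0 - l.getD j 0 := by
  simp [phiBar]

lemma getD_drop (l : List S) (n t : ℕ) : (l.drop n).getD t 0 = l.getD (n + t) 0 := by
  rcases Nat.lt_or_ge (n + t) l.length with h | h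
  · rw [List.getD_eq_getElem _ _ (by simp; omega), List.getD_eq_getElem _ _ h]
    simp [List.getElem_drop]
  · rw [List.getD_eq_default _ _ (by simp; omega), List.getD_eq_default _ _ h]

lemma phiBar_append (k : ℕ) (c e : List S) (hc : k ≤ c.length) :
    phiBar k (c ++ e) = phiBar k c ++ phiBar k (c.drop (c.length - k) ++ e) := by
  have hgd : ∀ t, ((c.drop (c.length - k) ++ e)).getD t 0 = (c ++ e).getD (t + (c.length - k)) 0 := by
    intro t
    rcases Nat.lt_or_ge t k with ht | ht
    · rw [List.getD_append _ _ _ _ (by simp; omega), getD_drop,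
        List.getD_append _ _ _ _ (by omega), Nat.add_comm t]
    · rw [List.getD_append_right _ _ _ _ (by simp; omega),
        List.getD_append_right _ _ _ _ (by omega)]
      congr 1
      simp
      omega
  apply List.ext_getElem
  · simp [phiBar_length]
    omega
  · intro j h1 h2
    rcases Nat.lt_or_ge j (c.length - k) with hj | hj
    · rw [List.getElem_append_left (by simpa [phiBar_length] using hj)]
      rw [phiBar_getElem _ _ _ (by simp at h1 ⊢; omega), phiBar_getElem _ _ _ hj]
      rw [List.getD_append _ _ _ _ (by omega), List.getD_append _ _ _ _ (by omega)]
    · rw [List.getElem_append_right (by simpa [phiBar_length] using hj)]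
      have hlen : (phiBar k c).length = c.length - k := phiBar_length k c
      have h1' : j < (c ++ e).length - k := by simpa [phiBar_length] using h1
      have hm : j - (phiBar k c).length < (c.drop (c.length - k) ++ e).length - k := by
        simp [hlen] at h1' ⊢
        omega
      rw [phiBar_getElem _ _ _ (by simpa [phiBar_length] using h1'),
        phiBar_getElem _ _ _ hm, hgd, hgd]
      rw [hlen]
      congr 2 <;> omega

lemma phiBar_double (k : ℕ) (y : List S) (hy : y.length = k) :
    phiBar k (y ++ y) = List.replicate k (0 : S) := by
  apply List.ext_getElem
  · simp [phiBar_length, hy]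
  · intro j h1 h2
    have hj : j < k := by simpa using h2
    rw [List.getElem_replicate,
      phiBar_getElem _ _ _ (by simp [hy]; omega),
      List.getD_append_right _ _ _ _ (by omega),
      List.getD_append _ _ _ _ (by omega)]
    simp [hy, sub_self]

lemma dup_phiBar {k : ℕ} {a b : List S} (h : Dup k a b) :
    ∃ u v : List S, phiBar k a = u ++ v ∧
      phiBar k b = u ++ List.replicate k (0 : S) ++ v := by
  obtain ⟨x, y, z, hy, ha, hb⟩ := h
  refine ⟨phiBar k (x ++ y), phiBar k (y ++ z), ?_, ?_⟩
  · rw [ha, List.append_assoc x y z, ← List.append_assoc x y z,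
      phiBar_append k (x ++ y) z (by simp [hy])]
    congr 2
    simp [hy]
  · have hb' : b = (x ++ y) ++ (y ++ z) := by rw [hb]; simp [List.append_assoc]
    rw [hb', phiBar_append k (x ++ y) (y ++ z) (by simp [hy])]
    have hdrop : (x ++ y).drop ((x ++ y).length - k) = y := by
      simp [hy]
    rw [hdrop, show y ++ (y ++ z) = (y ++ y) ++ z by simp [List.append_assoc],
      phiBar_append k (y ++ y) z (by simp [hy])]
    have hdrop2 : (y ++ y).drop ((y ++ y).length - k) = y := by
      simp [hy, show k + k - k = k by omega]
    rw [hdrop2, phiBar_double k y hy, List.append_assoc]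
lemma dup_length {k : ℕ} {a b : List S} (h : Dup k a b) :
    b.length = a.length + k := by
  obtain ⟨x, y, z, hy, ha, hb⟩ := h
  subst ha hb
  simp [hy]
  omega

lemma dup_gg {k : ℕ} (hk : 0 < k) {a b : List S} (h : Dup k a b) :
    gg k 0 (phiBar k b) = gg k 0 (phiBar k a) + 1 := by
  obtain ⟨u, v, ha, hb⟩ := dup_phiBar h
  rw [ha, hb, gg_insert k hk v u 0]

lemma descN_length {k t : ℕ} {a b : List S} (h : DescN k t a b) :
    b.length = a.length + k * t := by
  induction t generalizing b with
  | zero => cases h; simp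
  | succ t ih =>
    obtain ⟨c, hc, hd⟩ := h
    rw [dup_length hd, ih hc]
    ring

lemma descN_gg {k : ℕ} (hk : 0 < k) {t : ℕ} {a b : List S} (h : DescN k t a b) :
    gg k 0 (phiBar k b) = gg k 0 (phiBar k a) + t := by
  induction t generalizing b with
  | zero => cases h; simp
  | succ t ih =>
    obtain ⟨c, hc, hd⟩ := h
    rw [dup_gg hk hd, ih hc]
    omega

lemma descN_trans {k s t : ℕ} {a b c : List S} (h1 : DescN k s a b)
    (h2 : DescN k t b c) : DescN k (s + t) a c := by
  induction t generalizing c with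
  | zero => cases h2; exact h1
  | succ t ih =>
    obtain ⟨d, hd, hdup⟩ := h2
    exact ⟨d, ih hd, hdup⟩

lemma descN_window {k t : ℕ} (ht : 0 < t) {a b : List S} (h : DescN k t a b) :
    k ≤ a.length := by
  induction t generalizing b with
  | zero => omega
  | succ t ih =>
    obtain ⟨c, hc, hdup⟩ := h
    rcases Nat.eq_zero_or_pos t with rfl | ht'
    · cases hc
      obtain ⟨x, y, z, hy, ha, _⟩ := hdup
      subst ha
      simp
      omega
    · exact ih ht' hc

/-- Deduplication: if `φ̄(a)` contains `0^k`, then `a` is a duplication of a shorter string. -/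
lemma exists_dedup {k : ℕ} (hk : 0 < k) {a : List S} {u v : List S}
    (h : phiBar k a = u ++ List.replicate k (0 : S) ++ v) :
    ∃ c : List S, Dup k c a := by
  set i := u.length with hi
  have hlen : a.length - k = i + k + v.length := by
    have := phiBar_length k a
    rw [h] at this
    simp at this
    omega
  have hik : i + 2 * k ≤ a.length := by omega
  -- the zero entries give `a.getD (j+k) = a.getD j` for `i ≤ j < i + k`
  have hzero : ∀ j, i ≤ j → j < i + k → a.getD (j + k) 0 = a.getD j 0 := by
    intro j hji hjk
    have hj : j < a.length - k := by omega
    have h1 : (phiBar k a).getD j 0 = 0 := by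
      rw [h, List.getD_append _ _ _ _
          (by rw [List.length_append, List.length_replicate]; omega),
        List.getD_append_right _ _ _ _ (by omega),
        List.getD_eq_getElem _ _ (by rw [List.length_replicate]; omega)]
      simp
    rw [List.getD_eq_getElem _ _ (by simpa [phiBar_length] using hj),
      phiBar_getElem k a j hj] at h1
    exact sub_eq_zero.mp h1
  refine ⟨a.take i ++ (a.drop i).take k ++ a.drop (i + 2 * k),
    a.take i, (a.drop i).take k, a.drop (i + 2 * k), by simp; omega, rfl, ?_⟩
  have hkey : (a.drop (i + k)).take k = (a.drop i).take k := by
    apply List.ext_getElem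
    · simp
      omega
    · intro j h1 h2
      simp only [List.getElem_take, List.getElem_drop]
      have hj : j < k := by simp at h1; omega
      have := hzero (i + j) (by omega) (by omega)
      rw [List.getD_eq_getElem _ _ (by omega), List.getD_eq_getElem _ _ (by omega)] at this
      convert this using 2
      omega
  have hsplit : a.drop (i + k) = (a.drop (i + k)).take k ++ a.drop (i + 2 * k) := by
    conv_lhs => rw [← List.take_append_drop k (a.drop (i + k))]
    rw [List.drop_drop]
    congr 2
    omega
  conv_lhs => rw [← List.take_append_drop i a, ← List.take_append_drop k (a.drop i)]
  rw [List.drop_drop, hsplit, hkey]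
  simp [List.append_assoc]
lemma mem_dstar_self (k : ℕ) (x : List S) : x ∈ DStar k x :=
  Set.mem_iUnion.mpr ⟨0, rfl⟩

lemma irred_gg {k : ℕ} (hk : 0 < k) {x : List S} (h : Irred k x) :
    gg k 0 (phiBar k x) = 0 := by
  by_contra hpos
  have hpos' : 0 < gg k 0 (phiBar k x) := Nat.pos_of_ne_zero hpos
  have hsplit : ∃ u v : List S, phiBar k x = u ++ List.replicate k (0 : S) ++ v := by
    rcases gg_pos k (phiBar k x) 0 hk hpos' with h1 | ⟨v, hv⟩
    · exact h1
    · exact ⟨[], v, by simpa using hv⟩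
  obtain ⟨u, v, huv⟩ := hsplit
  obtain ⟨c, hc⟩ := exists_dedup hk huv
  have hmem : x ∈ DStar k c := Set.mem_iUnion.mpr ⟨1, c, rfl, hc⟩
  have := h.2 c hmem
  have hlen := dup_length hc
  rw [this] at hlen
  omega

lemma exists_irred {k : ℕ} (hk : 0 < k) :
    ∀ (n : ℕ) (x : List S), x.length = n → k ≤ n →
      ∃ z : List S, Irred k z ∧ x ∈ DStar k z := by
  intro n
  induction n using Nat.strong_induction_on with
  | _ n ih =>
    intro x hxn hkn
    by_cases hx : ∀ z : List S, x ∈ DStar k z → z = x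
    · exact ⟨x, ⟨by omega, hx⟩, mem_dstar_self k x⟩
    · push_neg at hx
      obtain ⟨z, hz, hne⟩ := hx
      obtain ⟨t, ht⟩ := Set.mem_iUnion.mp hz
      have htpos : 0 < t := by
        rcases Nat.eq_zero_or_pos t with rfl | h
        · exact (hne ht).elim
        · exact h
      have hlen := descN_length (a := z) (b := x) ht
      have hzk : k ≤ z.length := descN_window htpos ht
      have hkt : k ≤ k * t := Nat.le_mul_of_pos_right k htpos
      obtain ⟨w, hw, hws⟩ := ih z.length (by omega) z rfl hzk
      obtain ⟨s, hs⟩ := Set.mem_iUnion.mp hws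
      exact ⟨w, hw, Set.mem_iUnion.mpr ⟨s + t, descN_trans hs ht⟩⟩

lemma rt_spec {k : ℕ} (hk : 0 < k) {x : List S} (hx : k ≤ x.length) :
    Irred k (rt k x) ∧ x ∈ DStar k (rt k x) := by
  have hex : ∃ z : List S, Irred k z ∧ x ∈ DStar k z :=
    exists_irred hk x.length x rfl hx
  rw [rt, dif_pos hex]
  exact hex.choose_spec

lemma rr_eq {k : ℕ} (hk : 0 < k) {x : List S} (hx : k ≤ x.length) :
    rr k x = gg k 0 (phiBar k x) := by
  obtain ⟨hirr, hmem⟩ := rt_spec hk hx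
  obtain ⟨t, ht⟩ := Set.mem_iUnion.mp hmem
  have hlen := descN_length (a := rt k x) (b := x) ht
  have hg := descN_gg hk (a := rt k x) (b := x) ht
  rw [irred_gg hk hirr] at hg
  rw [rr, hlen, hg]
  simp [Nat.mul_div_cancel_left _ hk]
/-- Reconstruct a string from its prefix values `p` and discrete derivative `d`,
with window length `K + 1`. -/
def recS (K : ℕ) (p d : ℕ → S) : ℕ → S
  | j =>
    if h : j < K + 1 then p j
    else recS K p d (j - (K + 1)) + d (j - (K + 1))
  termination_by j => j
  decreasing_by omega

lemma recS_lt {K : ℕ} {p d : ℕ → S} {j : ℕ} (h : j < K + 1) :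
    recS K p d j = p j := by
  rw [recS]
  simp [h]

lemma recS_ge {K : ℕ} {p d : ℕ → S} {j : ℕ} (h : ¬j < K + 1) :
    recS K p d j = recS K p d (j - (K + 1)) + d (j - (K + 1)) := by
  rw [recS]
  simp [h]

lemma sum_gg_phiBar (k n : ℕ) (hk : 2 ≤ k) (hkn : k ≤ n) :
    ∑ f : Fin n → S, gg k 0 (phiBar k (List.ofFn f)) =
      Fintype.card S ^ k * ∑ d : Fin (n - k) → S, gg k 0 (List.ofFn d) := by
  have hK : k - 1 + 1 = k := by omega
  set Dm : (Fin n → S) → (Fin (n - k) → S) := fun f i =>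
    f ⟨(i : ℕ) + k, by have := i.isLt; omega⟩ - f ⟨(i : ℕ), by have := i.isLt; omega⟩
    with hDm
  have hphi : ∀ f : Fin n → S, phiBar k (List.ofFn f) = List.ofFn (Dm f) := by
    intro f
    apply List.ext_getElem
    · simp [phiBar_length]
    · intro j h1 h2
      have hj : j < n - k := by simpa using h2
      rw [phiBar_getElem _ _ _ (by simpa using hj), List.getElem_ofFn,
        List.getD_eq_getElem _ _ (by simp; omega), List.getD_eq_getElem _ _ (by simp; omega)]
      simp [hDm]
  -- the reconstruction map
  set Phi : (Fin k → S) × (Fin (n - k) → S) → (Fin n → S) := fun pd j =>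
    recS (k - 1) (fun i => if h : i < k then pd.1 ⟨i, h⟩ else 0)
      (fun i => if h : i < n - k then pd.2 ⟨i, h⟩ else 0) (j : ℕ)
    with hPhi
  set Psi : (Fin n → S) → (Fin k → S) × (Fin (n - k) → S) := fun f =>
    (fun i => f ⟨(i : ℕ), by have := i.isLt; omega⟩, Dm f) with hPsi
  have hDmPhi : ∀ pd, Dm (Phi pd) = pd.2 := by
    intro pd
    funext i
    have hik : (i : ℕ) < n - k := i.isLt
    have h1 : Phi pd ⟨(i : ℕ) + k, by omega⟩ =
        Phi pd ⟨(i : ℕ), by omega⟩ + (if h : (i : ℕ) < n - k then pd.2 ⟨i, h⟩ else 0) := by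
      simp only [hPhi]
      rw [recS_ge (by omega)]
      rw [hK, show (i : ℕ) + k - k = (i : ℕ) by omega]
    simp only [hDm]
    rw [h1, dif_pos hik]
    abel
  have hleft : ∀ pd, Psi (Phi pd) = pd := by
    intro pd
    have h2 : (fun i : Fin k => Phi pd ⟨(i : ℕ), by have := i.isLt; omega⟩) = pd.1 := by
      funext i
      simp only [hPhi]
      rw [recS_lt (by have := i.isLt; omega)]
      rw [dif_pos i.isLt]
    simp only [hPsi]
    rw [hDmPhi]
    exact Prod.ext (by simpa using h2) rfl
  have hright : ∀ f, Phi (Psi f) = f := by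
    intro f
    funext j
    have hdfun : (fun i => if h : i < n - k then Dm f ⟨i, h⟩ else 0) =
        (fun i => if h : i < n - k then
          f ⟨i + k, by omega⟩ - f ⟨i, by omega⟩ else 0) := by
      funext i
      by_cases h : i < n - k <;> rfl
    have key : ∀ m : ℕ, ∀ hm : m < n,
        recS (k - 1) (fun i => if h : i < k then f ⟨i, by omega⟩ else 0)
          (fun i => if h : i < n - k then
            f ⟨i + k, by omega⟩ - f ⟨i, by omega⟩ else 0) m = f ⟨m, hm⟩ := by
      intro m
      induction m using Nat.strong_induction_on with
      | _ m ih =>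
        intro hm
        rcases Nat.lt_or_ge m k with hmk | hmk
        · rw [recS_lt (by omega), dif_pos hmk]
        · rw [recS_ge (by omega)]
          simp only [hK]
          rw [dif_pos (show m - k < n - k by omega)]
          rw [ih (m - k) (by omega) (by omega)]
          have hmm : m - k + k = m := by omega
          simp only [hmm]
          abel
    simp only [hPhi, hPsi, hdfun]
    exact key (j : ℕ) j.isLt
  have hbij : Function.Bijective Phi :=
    ⟨Function.LeftInverse.injective hleft, Function.RightInverse.surjective hright⟩
  calc ∑ f : Fin n → S, gg k 0 (phiBar k (List.ofFn f))
      = ∑ f : Fin n → S, gg k 0 (List.ofFn (Dm f)) := by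
        refine Finset.sum_congr rfl fun f _ => by rw [hphi]
    _ = ∑ pd : (Fin k → S) × (Fin (n - k) → S), gg k 0 (List.ofFn pd.2) := by
        refine (Fintype.sum_bijective Phi hbij _ _ fun pd => ?_).symm
        rw [hDmPhi]
    _ = Fintype.card S ^ k * ∑ d : Fin (n - k) → S, gg k 0 (List.ofFn d) := by
        rw [Fintype.sum_prod_type]
        simp [Finset.sum_const, Fintype.card_fun, mul_comm]
/-- `TT k r N = ∑_{d ∈ S^N} gg k r d`. -/
def TT (S : Type) [Fintype S] [DecidableEq S] [Ring S] (k r N : ℕ) : ℕ :=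
  ∑ d : Fin N → S, gg k r (List.ofFn d)

lemma TT_zero (k r : ℕ) : TT S k r 0 = r / k := by
  simp [TT, List.ofFn_zero]

lemma TT_succ (k r N : ℕ) :
    TT S k r (N + 1) = TT S k (r + 1) N +
      (Fintype.card S - 1) * (Fintype.card S ^ N * (r / k) + TT S k 0 N) := by
  classical
  let e : S × (Fin N → S) ≃ (Fin (N + 1) → S) := Fin.consEquiv fun _ => S
  have h1 : TT S k r (N + 1) =
      ∑ ad : S × (Fin N → S), gg k r (List.ofFn (Fin.cons ad.1 ad.2)) := by
    rw [TT]
    exact (Equiv.sum_comp e (fun f => gg k r (List.ofFn f))).symm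
  have h2 : ∀ (a : S) (d : Fin N → S),
      List.ofFn (Fin.cons a d : Fin (N + 1) → S) = a :: List.ofFn d := by
    intro a d
    rw [List.ofFn_succ]
    simp
  rw [h1]
  rw [Fintype.sum_prod_type]
  have h3 : ∀ a : S, ∑ d : Fin N → S, gg k r (List.ofFn (Fin.cons a d)) =
      if a = 0 then TT S k (r + 1) N else Fintype.card S ^ N * (r / k) + TT S k 0 N := by
    intro a
    by_cases ha : a = 0
    · subst ha
      rw [if_pos rfl, TT]
      refine Finset.sum_congr rfl fun d _ => ?_
      rw [h2, gg_cons_zero]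
    · rw [if_neg ha]
      have : ∀ d : Fin N → S, gg k r (List.ofFn (Fin.cons a d)) =
          r / k + gg k 0 (List.ofFn d) := fun d => by rw [h2, gg_cons_ne k _ ha]
      rw [Finset.sum_congr rfl fun d _ => this d, Finset.sum_add_distrib]
      simp [TT, Finset.sum_const, Fintype.card_fun]
  rw [Finset.sum_congr rfl fun a _ => h3 a, Finset.sum_ite, Finset.sum_const,
    Finset.sum_const, Finset.filter_eq' Finset.univ (0 : S), if_pos (Finset.mem_univ _)]
  have hcard : (Finset.univ.filter (fun a : S => ¬a = 0)).card = Fintype.card S - 1 := by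
    have hset : Finset.univ.filter (fun a : S => ¬a = 0) = Finset.univ.erase 0 := by
      ext a
      simp [Finset.mem_erase]
    rw [hset, Finset.card_erase_of_mem (Finset.mem_univ _), Finset.card_univ]
  rw [hcard]
  simp [smul_eq_mul]
/-- The limit constant `(q-1)/(q(q^k-1))`. -/
noncomputable def cC (q k : ℕ) : ℝ := ((q : ℝ) - 1) / ((q : ℝ) * ((q : ℝ) ^ k - 1))

/-- The potential function. -/
noncomputable def hF (q k r : ℕ) : ℝ :=
  ((r / k : ℕ) : ℝ) + (q : ℝ) ^ (r % k) / ((q : ℝ) ^ k - 1)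

lemma qpow_ne (q k : ℕ) (hq : 2 ≤ q) (hk : 1 ≤ k) : (1 : ℝ) < (q : ℝ) ^ k := by
  have : (2 : ℝ) ≤ (q : ℝ) := by exact_mod_cast hq
  calc (1 : ℝ) < 2 ^ k := one_lt_pow₀ (by norm_num) (by omega)
    _ ≤ (q : ℝ) ^ k := pow_le_pow_left₀ (by norm_num) this k

lemma qpow_mod_le (q k r : ℕ) (hq : 2 ≤ q) (hk : 2 ≤ k) :
    (q : ℝ) ^ (r % k) ≤ (q : ℝ) ^ k - 1 := by
  have h2 : (2 : ℝ) ≤ (q : ℝ) := by exact_mod_cast hq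
  have h1 : (1 : ℝ) ≤ (q : ℝ) := by linarith
  have hs : r % k ≤ k - 1 := by have := Nat.mod_lt r (show 0 < k by omega); omega
  have hA : (q : ℝ) ^ (r % k) ≤ (q : ℝ) ^ (k - 1) := pow_le_pow_right₀ h1 hs
  have hB : (q : ℝ) ^ (k - 1) + 1 ≤ (q : ℝ) ^ k := by
    have hkk : k - 1 + 1 = k := by omega
    have h1p : (1 : ℝ) ≤ (q : ℝ) ^ (k - 1) := one_le_pow₀ h1
    calc (q : ℝ) ^ (k - 1) + 1 ≤ (q : ℝ) ^ (k - 1) + (q : ℝ) ^ (k - 1) := by linarith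
      _ = 2 * (q : ℝ) ^ (k - 1) := by ring
      _ ≤ (q : ℝ) * (q : ℝ) ^ (k - 1) := by
          have := pow_nonneg (show (0:ℝ) ≤ q by linarith) (k - 1)
          nlinarith
      _ = (q : ℝ) ^ k := by rw [← pow_succ', hkk]
  linarith

/-- The key one-step identity for the potential function (multiplied-out form). -/
lemma hF_identity (q k r : ℕ) (hq : 2 ≤ q) (hk : 2 ≤ k) :
    hF q k (r + 1) + ((q : ℝ) - 1) * (((r / k : ℕ) : ℝ) + hF q k 0) =
      (q : ℝ) * (hF q k r + cC q k) := by
  have hq0 : (q : ℝ) ≠ 0 := by positivity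
  have hQ : (q : ℝ) ^ k - 1 ≠ 0 := by
    have := qpow_ne q k hq (by omega)
    linarith
  have hmodk : r % k < k := Nat.mod_lt r (by omega)
  have hdm : r / k * k + r % k = r := Nat.div_add_mod' r k
  rcases Nat.lt_or_ge (r % k + 1) k with hcase | hcase
  · -- r % k + 1 < k : div unchanged, mod increments
    have hdiv : (r + 1) / k = r / k := by
      rw [show r + 1 = r % k + 1 + (r / k) * k by omega,
        Nat.add_mul_div_right _ _ (show 0 < k by omega),
        Nat.div_eq_of_lt hcase]
      omega
    have hmod : (r + 1) % k = r % k + 1 := by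
      rw [show r + 1 = r % k + 1 + (r / k) * k by omega,
        Nat.add_mul_mod_self_right, Nat.mod_eq_of_lt hcase]
    rw [hF, hF, hF, cC, hdiv, hmod]
    rw [pow_succ]
    simp only [Nat.zero_div, Nat.zero_mod, Nat.cast_zero, pow_zero]
    field_simp
    ring
  · -- r % k + 1 = k : div increments, mod resets
    have hrk : r % k = k - 1 := by omega
    have hr1 : r + 1 = (r / k + 1) * k := by
      have hmul : (r / k + 1) * k = r / k * k + k := by ring
      omega
    have hdiv : (r + 1) / k = r / k + 1 := by
      rw [hr1, Nat.mul_div_cancel _ (show 0 < k by omega)]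
    have hmod : (r + 1) % k = 0 := by
      rw [hr1, Nat.mul_mod_left]
    have hpowk : (q : ℝ) ^ k = (q : ℝ) * (q : ℝ) ^ (k - 1) := by
      rw [← pow_succ', show k - 1 + 1 = k by omega]
    rw [hF, hF, hF, cC, hdiv, hmod, hrk]
    rw [hpowk] at hQ ⊢
    simp only [Nat.zero_div, Nat.zero_mod, Nat.cast_zero, pow_zero, Nat.cast_add,
      Nat.cast_one]
    field_simp
    ring

lemma TT_bound (hq : 2 ≤ Fintype.card S) (k : ℕ) (hk : 2 ≤ k) :
    ∀ N r : ℕ,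
      |(TT S k r N : ℝ) -
        (cC (Fintype.card S) k * N + hF (Fintype.card S) k r) * (Fintype.card S : ℝ) ^ N|
      ≤ (Fintype.card S : ℝ) ^ N := by
  set q := Fintype.card S with hqdef
  have hq2 : (2 : ℝ) ≤ (q : ℝ) := by exact_mod_cast hq
  have hQpos : (0 : ℝ) < (q : ℝ) ^ k - 1 := by
    have := qpow_ne q k hq (by omega)
    linarith
  intro N
  induction N with
  | zero =>
    intro r
    rw [TT_zero]
    simp only [Nat.cast_zero, mul_zero, zero_add, pow_zero, mul_one]
    rw [hF]
    have h1 : ((r / k : ℕ) : ℝ) - (((r / k : ℕ) : ℝ) + (q : ℝ) ^ (r % k) / ((q : ℝ) ^ k - 1))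
        = -((q : ℝ) ^ (r % k) / ((q : ℝ) ^ k - 1)) := by ring
    rw [h1, abs_neg, abs_of_nonneg (by positivity)]
    rw [div_le_one hQpos]
    exact qpow_mod_le q k r hq hk
  | succ N ih =>
    intro r
    have hcast : (TT S k r (N + 1) : ℝ) = (TT S k (r + 1) N : ℝ) +
        ((q : ℝ) - 1) * ((q : ℝ) ^ N * ((r / k : ℕ) : ℝ) + (TT S k 0 N : ℝ)) := by
      rw [TT_succ, ← hqdef]
      push_cast [Nat.cast_sub (show 1 ≤ q by omega)]
      ring
    have hid := hF_identity q k r hq hk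
    have hsplit : (TT S k r (N + 1) : ℝ) -
        (cC q k * (N + 1 : ℕ) + hF q k r) * (q : ℝ) ^ (N + 1) =
        ((TT S k (r + 1) N : ℝ) - (cC q k * N + hF q k (r + 1)) * (q : ℝ) ^ N) +
          ((q : ℝ) - 1) *
            ((TT S k 0 N : ℝ) - (cC q k * N + hF q k 0) * (q : ℝ) ^ N) := by
      rw [hcast]
      push_cast
      linear_combination ((q : ℝ) ^ N) * hid
    rw [hsplit]
    have h1 := ih (r + 1)
    have h0 := ih 0
    calc |_| ≤ |(TT S k (r + 1) N : ℝ) - (cC q k * N + hF q k (r + 1)) * (q : ℝ) ^ N| +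
          |((q : ℝ) - 1) *
            ((TT S k 0 N : ℝ) - (cC q k * N + hF q k 0) * (q : ℝ) ^ N)| := abs_add_le _ _
      _ ≤ (q : ℝ) ^ N + ((q : ℝ) - 1) * (q : ℝ) ^ N := by
          rw [abs_mul, abs_of_nonneg (by linarith : (0:ℝ) ≤ (q : ℝ) - 1)]
          have hmul : ((q : ℝ) - 1) *
              |(TT S k 0 N : ℝ) - (cC q k * N + hF q k 0) * (q : ℝ) ^ N| ≤
              ((q : ℝ) - 1) * (q : ℝ) ^ N :=
            mul_le_mul_of_nonneg_left h0 (by linarith)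
          linarith
      _ = (q : ℝ) ^ (N + 1) := by ring


theorem statement1 (hq : 2 ≤ Fintype.card S) (k : ℕ) (hk : 2 ≤ k) :
    ∃ B : ℝ, ∀ n : ℕ, k ≤ n →
      |(1 / (Fintype.card S : ℝ) ^ n) * ∑ f : Fin n → S, (rr k (List.ofFn f) : ℝ)
          - (((Fintype.card S : ℝ) - 1) /
              ((Fintype.card S : ℝ) * ((Fintype.card S : ℝ) ^ k - 1))) * ((n : ℝ) - (k : ℝ))|
        ≤ B := by
  classical
  refine ⟨2, fun n hn => ?_⟩
  set q := Fintype.card S with hqdef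
  have hq2 : (2 : ℝ) ≤ (q : ℝ) := by exact_mod_cast hq
  have hqpos : (0 : ℝ) < (q : ℝ) := by linarith
  set N := n - k with hN
  have hnk : n = k + N := by omega
  have hk0 : 0 < k := by omega
  -- rewrite the sum of r-values
  have hsum1 : ∑ f : Fin n → S, rr k (List.ofFn f) = q ^ k * TT S k 0 N := by
    have h1 : ∀ f : Fin n → S, rr k (List.ofFn f) = gg k 0 (phiBar k (List.ofFn f)) :=
      fun f => rr_eq hk0 (by simp [hn])
    rw [Finset.sum_congr rfl fun f _ => h1 f, sum_gg_phiBar k n hk hn]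
    rfl
  have hQ3 : (3 : ℝ) ≤ (q : ℝ) ^ k := by
    calc (3 : ℝ) ≤ 2 ^ k := by
          calc (3 : ℝ) ≤ 2 ^ 2 := by norm_num
            _ ≤ 2 ^ k := pow_le_pow_right₀ (by norm_num) hk
      _ ≤ (q : ℝ) ^ k := pow_le_pow_left₀ (by norm_num) hq2 k
  have hQpos : (0 : ℝ) < (q : ℝ) ^ k - 1 := by linarith
  have hpowN : (0 : ℝ) < (q : ℝ) ^ N := by positivity
  -- the average equals TT / q^N
  have havg : (1 / (q : ℝ) ^ n) * ∑ f : Fin n → S, (rr k (List.ofFn f) : ℝ) =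
      (TT S k 0 N : ℝ) / (q : ℝ) ^ N := by
    have hc : ∑ f : Fin n → S, (rr k (List.ofFn f) : ℝ) =
        ((∑ f : Fin n → S, rr k (List.ofFn f) : ℕ) : ℝ) := by
      push_cast
      rfl
    rw [hc, hsum1]
    have hpow : (q : ℝ) ^ n = (q : ℝ) ^ k * (q : ℝ) ^ N := by
      rw [hnk, pow_add]
    push_cast
    rw [hpow]
    field_simp
  rw [havg]
  have hbound := TT_bound hq k hk N 0
  have hhF0 : hF q k 0 = 1 / ((q : ℝ) ^ k - 1) := by
    rw [hF]
    simp
  have hhF0le : hF q k 0 ≤ 1 := by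
    rw [hhF0, div_le_one hQpos]
    linarith
  have hhF0pos : 0 < hF q k 0 := by
    rw [hhF0]
    positivity
  have hcast : (n : ℝ) - (k : ℝ) = (N : ℝ) := by
    rw [hN]
    push_cast [Nat.cast_sub hn]
    ring
  have hcc : ((q : ℝ) - 1) / ((q : ℝ) * ((q : ℝ) ^ k - 1)) = cC q k := rfl
  rw [hcast, hcc]
  have hdiv : (TT S k 0 N : ℝ) / (q : ℝ) ^ N - cC q k * N =
      ((TT S k 0 N : ℝ) - (cC q k * N + hF q k 0) * (q : ℝ) ^ N) / (q : ℝ) ^ N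
        + hF q k 0 := by
    field_simp
    ring
  rw [hdiv]
  have h1 : |((TT S k 0 N : ℝ) - (cC q k * N + hF q k 0) * (q : ℝ) ^ N) / (q : ℝ) ^ N|
      ≤ 1 := by
    rw [abs_div, abs_of_pos hpowN, div_le_one hpowN]
    exact hbound
  calc |((TT S k 0 N : ℝ) - (cC q k * N + hF q k 0) * (q : ℝ) ^ N) / (q : ℝ) ^ N
        + hF q k 0|
      ≤ |((TT S k 0 N : ℝ) - (cC q k * N + hF q k 0) * (q : ℝ) ^ N) / (q : ℝ) ^ N|
        + |hF q k 0| := abs_add_le _ _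
    _ ≤ 1 + 1 := by
        have : |hF q k 0| = hF q k 0 := abs_of_pos hhF0pos
        linarith
    _ = 2 := by norm_num

end TandemDup
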